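/- Let h : ℝⁿ → ℝ be a continuous nonnegative function such that h·λ is a probability measure with finite first moment. Then inf { ∫ f h dλ + log(∫ e^{-f} dλ) : f continuous, f > τ, f(x) ≤ C_f(1+|x|) } = -∫ h log h dλ. -/

import Mathlib

open MeasureTheory Real Filter Topology

lemma gibbs_pointwise {a b : ℝ} (ha : 0 ≤ a) (hb : 0 < b) :
    a - b ≤ a * Real.log a - a * Real.log b := by
  rcases eq_or_lt_of_le ha with h0 | h0
  · simp [← h0]; linarith
  · have h1 := Real.log_le_sub_one_of_pos (show 0 < b / a from div_pos hb h0)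
    rw [Real.log_div hb.ne' h0.ne'] at h1
    have h2 := mul_le_mul_of_nonneg_left h1 h0.le
    have h3 : a * (b / a) = b := mul_div_cancel₀ b h0.ne'
    nlinarith


private lemma stmt11_lower {n : ℕ} (h : EuclideanSpace ℝ (Fin n) → ℝ)
    (hc : Continuous h) (hnn : ∀ x, 0 ≤ h x)
    (hint : Integrable h) (hprob : ∫ x, h x = 1)
    (hmom : Integrable fun x => ‖x‖ * h x)
    (hent : Integrable fun x => h x * Real.log (h x))
    (τ : ℝ) (f : EuclideanSpace ℝ (Fin n) → ℝ) (hf : Continuous f)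
    (hτ : ∀ x, τ < f x) (C : ℝ) (hC : ∀ x, f x ≤ C * (1 + ‖x‖))
    (hef : Integrable fun x => Real.exp (-f x)) :
    (-∫ x, h x * Real.log (h x)) ≤ (∫ x, f x * h x) + Real.log (∫ x, Real.exp (-f x)) := by
  set Z : ℝ := ∫ x, Real.exp (-f x) with hZ
  have hZpos : 0 < Z := by
    rw [hZ, integral_pos_iff_support_of_nonneg (fun x => (Real.exp_pos _).le) hef]
    have : Function.support (fun x : EuclideanSpace ℝ (Fin n) => Real.exp (-f x)) = Set.univ :=
      Set.eq_univ_of_forall fun x => (Real.exp_pos _).ne'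
    rw [this]
    exact isOpen_univ.measure_pos _ Set.univ_nonempty
  set B : ℝ := Real.log Z with hB
  have hfh : Integrable (fun x => f x * h x) := by
    refine Integrable.mono' (((hint.const_mul (|τ| + |C|)).add (hmom.const_mul |C|))) 
      ((hf.mul hc).aestronglyMeasurable) (Filter.Eventually.of_forall fun x => ?_)
    have h1 : |f x| ≤ (|τ| + |C|) + |C| * ‖x‖ := by
      rw [abs_le]
      constructor
      · nlinarith [hτ x, neg_abs_le τ, mul_nonneg (abs_nonneg C) (norm_nonneg x), abs_nonneg C]
      · calc f x ≤ C * (1 + ‖x‖) := hC x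
          _ ≤ |C| * (1 + ‖x‖) := mul_le_mul_of_nonneg_right (le_abs_self C) (by positivity)
          _ = |C| + |C| * ‖x‖ := by ring
          _ ≤ |τ| + |C| + |C| * ‖x‖ := by linarith [abs_nonneg τ]
    rw [norm_mul, Real.norm_eq_abs, Real.norm_eq_abs, abs_of_nonneg (hnn x)]
    calc |f x| * h x ≤ ((|τ| + |C|) + |C| * ‖x‖) * h x :=
          mul_le_mul_of_nonneg_right h1 (hnn x)
      _ = (|τ| + |C|) * h x + |C| * (‖x‖ * h x) := by ring
  have key : ∫ x, (h x - Real.exp (-f x) / Z) ≤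
      ∫ x, (h x * Real.log (h x) + (f x * h x + B * h x)) := by
    apply integral_mono (hint.sub (hef.div_const Z))
      (hent.add (hfh.add (hint.const_mul B)))
    intro x
    have hb : 0 < Real.exp (-f x) / Z := div_pos (Real.exp_pos _) hZpos
    have hlogb : Real.log (Real.exp (-f x) / Z) = -f x - B := by
      rw [Real.log_div (Real.exp_ne_zero _) hZpos.ne', Real.log_exp]
    have := gibbs_pointwise (hnn x) hb
    rw [hlogb] at this
    simp only [Pi.sub_apply, Pi.add_apply]
    nlinarith [this]
  have lhs : ∫ x, (h x - Real.exp (-f x) / Z) = 0 := by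
    rw [integral_sub hint (hef.div_const Z), integral_div, hprob, ← hZ,
      div_self hZpos.ne']
    ring
  have rhs : ∫ x, (h x * Real.log (h x) + (f x * h x + B * h x)) =
      (∫ x, h x * Real.log (h x)) + ((∫ x, f x * h x) + B) := by
    rw [integral_add hent ((hfh.add (hint.const_mul B) :
        Integrable fun x => f x * h x + B * h x)),
      integral_add hfh ((hint.const_mul B : Integrable fun x => B * h x)),
      integral_const_mul, hprob, mul_one]
  rw [lhs, rhs] at key
  linarith

private lemma stmt11_exists_j {n : ℕ} (h : EuclideanSpace ℝ (Fin n) → ℝ)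
    (hc : Continuous h) (hnn : ∀ x, 0 ≤ h x)
    (hent : Integrable fun x => h x * Real.log (h x)) (δ : ℝ) (hδ : 0 < δ) :
    ∃ j : ℕ, (∫ x, h x * Real.log (h x)) - δ/2 < ∫ x, min ((j:ℝ) * h x) (h x * Real.log (h x)) := by
  have hFt : Tendsto (fun j : ℕ => ∫ x, min ((j:ℝ) * h x) (h x * Real.log (h x))) atTop
      (𝓝 (∫ x, h x * Real.log (h x))) := by
    apply tendsto_integral_of_dominated_convergence (fun x => |h x * Real.log (h x)|)
    · intro j
      exact ((continuous_const.mul hc).min (Real.continuous_mul_log.comp hc)).aestronglyMeasurable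
    · exact hent.abs
    · intro j
      refine Eventually.of_forall fun x => ?_
      rw [Real.norm_eq_abs, abs_le]
      constructor
      · refine le_min ?_ (neg_abs_le _)
        have : 0 ≤ (j:ℝ) * h x := mul_nonneg (Nat.cast_nonneg j) (hnn x)
        linarith [neg_abs_le (h x * Real.log (h x)), abs_nonneg (h x * Real.log (h x))]
      · exact le_trans (min_le_right _ _) (le_abs_self _)
    · refine Eventually.of_forall fun x => ?_
      rcases eq_or_lt_of_le (hnn x) with h0 | h0
      · simp [← h0]
      · obtain ⟨N, hN⟩ := exists_nat_ge (Real.log (h x))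
        refine tendsto_const_nhds.congr' ?_
        rw [EventuallyEq, eventually_atTop]
        refine ⟨N, fun j hj => ?_⟩
        have : h x * Real.log (h x) ≤ (j:ℝ) * h x := by
          have : Real.log (h x) ≤ (j:ℝ) := le_trans hN (Nat.cast_le.mpr hj)
          nlinarith
        exact (min_eq_right this).symm
  exact (hFt.eventually (eventually_gt_nhds (by linarith))).exists

set_option maxHeartbeats 1000000 in
private lemma stmt11_construct {n : ℕ} (h : EuclideanSpace ℝ (Fin n) → ℝ)
    (hc : Continuous h) (hnn : ∀ x, 0 ≤ h x)
    (hint : Integrable h) (hprob : ∫ x, h x = 1)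
    (hmom : Integrable fun x => ‖x‖ * h x)
    (hent : Integrable fun x => h x * Real.log (h x))
    (τ : ℝ) (δ : ℝ) (hδ : 0 < δ) (j : ℕ)
    (hj : (∫ x, h x * Real.log (h x)) - δ/2 < ∫ x, min ((j:ℝ) * h x) (h x * Real.log (h x))) :
    ∃ f : EuclideanSpace ℝ (Fin n) → ℝ, Continuous f ∧
        (∀ x, τ < f x) ∧ (∃ C : ℝ, ∀ x, f x ≤ C * (1 + ‖x‖)) ∧
        (Integrable fun x => Real.exp (-f x)) ∧
        (∫ x, f x * h x) + Real.log (∫ x, Real.exp (-f x)) ≤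
          -((∫ x, h x * Real.log (h x)) - δ/2) + δ/2 := by
  set r : ℝ := (n : ℝ) + 1 with hr
  have hrpos : 0 < r := by positivity
  set φ : EuclideanSpace ℝ (Fin n) → ℝ := fun x => (1 + ‖x‖) ^ (-r) with hφ
  have hφpos : ∀ x, 0 < φ x := fun x => rpow_pos_of_pos (by positivity) _
  have hφle1 : ∀ x, φ x ≤ 1 := fun x =>
    Real.rpow_le_one_of_one_le_of_nonpos (by linarith [norm_nonneg x]) (by linarith)
  have hφcont : Continuous φ :=
    (continuous_const.add continuous_norm).rpow_const (fun x => Or.inl (by simp only [Pi.add_apply]; positivity))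
  have hφint : Integrable φ :=
    integrable_one_add_norm (by rw [finrank_euclideanSpace_fin]; linarith)
  set I : ℝ := ∫ x, φ x with hI
  have hI0 : 0 ≤ I := integral_nonneg fun x => (hφpos x).le
  set ε : ℝ := min 1 (δ / (2 * (I + 1))) with hε
  have hεpos : 0 < ε := lt_min one_pos (by positivity)
  have hεle1 : ε ≤ 1 := min_le_left _ _
  set K : ℝ := Real.exp j with hK
  have hKpos : 0 < K := Real.exp_pos _
  have hK1 : 1 ≤ K := Real.one_le_exp (Nat.cast_nonneg j)
  have hlogK : Real.log K = j := Real.log_exp _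
  set q : EuclideanSpace ℝ (Fin n) → ℝ := fun x => min K (max (h x) (ε * φ x)) with hq
  have hqpos : ∀ x, 0 < q x := fun x =>
    lt_min hKpos (lt_of_lt_of_le (mul_pos hεpos (hφpos x)) (le_max_right _ _))
  have hqleK : ∀ x, q x ≤ K := fun x => min_le_left _ _
  have hεφle1 : ∀ x, ε * φ x ≤ 1 := fun x =>
    mul_le_one₀ hεle1 (hφpos x).le (hφle1 x)
  have hqge : ∀ x, ε * φ x ≤ q x := fun x =>
    le_min (le_trans (hεφle1 x) hK1) (le_max_right _ _)
  have hqle : ∀ x, q x ≤ h x + ε * φ x := fun x =>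
    le_trans (min_le_right _ _) (max_le (le_add_of_nonneg_right (mul_pos hεpos (hφpos x)).le)
      (le_add_of_nonneg_left (hnn x)))
  have hqcont : Continuous q := continuous_const.min (hc.max (continuous_const.mul hφcont))
  have hqint : Integrable q := by
    refine Integrable.mono' (hint.add (hφint.const_mul ε)) hqcont.aestronglyMeasurable
      (Eventually.of_forall fun x => ?_)
    rw [Real.norm_eq_abs, abs_of_nonneg (hqpos x).le]
    exact hqle x
  set c₀ : ℝ := τ + 1 + (j : ℝ) with hc₀
  have hεle2 : ε ≤ δ / (2 * (I + 1)) := min_le_right _ _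
  clear_value I ε K c₀
  refine ⟨fun x => c₀ - Real.log (q x), ?_, ?_, ?_, ?_, ?_⟩
  · exact continuous_const.sub (hqcont.log fun x => (hqpos x).ne')
  · intro x
    have : Real.log (q x) ≤ (j : ℝ) := by
      rw [← hlogK]; exact Real.log_le_log (hqpos x) (hqleK x)
    simp only [hc₀]; linarith
  · refine ⟨max (c₀ - Real.log ε) r, fun x => ?_⟩
    have h1 : Real.log (ε * φ x) ≤ Real.log (q x) :=
      Real.log_le_log (mul_pos hεpos (hφpos x)) (hqge x)
    have h2 : Real.log (ε * φ x) = Real.log ε - r * Real.log (1 + ‖x‖) := by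
      rw [Real.log_mul hεpos.ne' (hφpos x).ne', hφ, Real.log_rpow (by positivity)]
      ring
    have h3 : Real.log (1 + ‖x‖) ≤ ‖x‖ := by
      have := Real.log_le_sub_one_of_pos (show (0:ℝ) < 1 + ‖x‖ by positivity)
      linarith
    have h4 : 0 ≤ Real.log (1 + ‖x‖) := Real.log_nonneg (by linarith [norm_nonneg x])
    have h5 : c₀ - Real.log (q x) ≤ (c₀ - Real.log ε) + r * ‖x‖ := by
      nlinarith [mul_le_mul_of_nonneg_left h3 hrpos.le]
    have h6 : (c₀ - Real.log ε) ≤ max (c₀ - Real.log ε) r := le_max_left _ _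
    have h7 : r * ‖x‖ ≤ max (c₀ - Real.log ε) r * ‖x‖ :=
      mul_le_mul_of_nonneg_right (le_max_right _ _) (norm_nonneg x)
    calc c₀ - Real.log (q x) ≤ (c₀ - Real.log ε) + r * ‖x‖ := h5
      _ ≤ max (c₀ - Real.log ε) r + max (c₀ - Real.log ε) r * ‖x‖ := by linarith
      _ = max (c₀ - Real.log ε) r * (1 + ‖x‖) := by ring
  · have : (fun x => Real.exp (-(c₀ - Real.log (q x)))) = fun x => q x * Real.exp (-c₀) := by
      funext x
      rw [neg_sub, Real.exp_sub, Real.exp_log (hqpos x), Real.exp_neg, div_eq_mul_inv]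
    rw [this]
    exact hqint.mul_const _
  · -- the value bound
    have hQint : (∫ x, Real.exp (-(c₀ - Real.log (q x)))) = (∫ x, q x) * Real.exp (-c₀) := by
      rw [← integral_mul_const]
      congr 1
      funext x
      rw [neg_sub, Real.exp_sub, Real.exp_log (hqpos x), Real.exp_neg, div_eq_mul_inv]
    have hQpos : 0 < ∫ x, q x := by
      rw [integral_pos_iff_support_of_nonneg (fun x => (hqpos x).le) hqint]
      have : Function.support q = Set.univ := Set.eq_univ_of_forall fun x => (hqpos x).ne'
      rw [this]
      exact isOpen_univ.measure_pos _ Set.univ_nonempty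
    have hlogq_int : Integrable (fun x => Real.log (q x) * h x) := by
      refine Integrable.mono' ((hint.const_mul ((j:ℝ) + |Real.log ε|)).add (hmom.const_mul r))
        ((hqcont.log fun x => (hqpos x).ne').mul hc).aestronglyMeasurable
        (Eventually.of_forall fun x => ?_)
      rw [norm_mul, Real.norm_eq_abs, Real.norm_eq_abs, abs_of_nonneg (hnn x)]
      have hb : |Real.log (q x)| ≤ ((j:ℝ) + |Real.log ε|) + r * ‖x‖ := by
        rw [abs_le]
        have h1 : Real.log (q x) ≤ (j : ℝ) := by
          rw [← hlogK]; exact Real.log_le_log (hqpos x) (hqleK x)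
        have h2 : Real.log (ε * φ x) ≤ Real.log (q x) :=
          Real.log_le_log (mul_pos hεpos (hφpos x)) (hqge x)
        have h3 : Real.log (ε * φ x) = Real.log ε - r * Real.log (1 + ‖x‖) := by
          rw [Real.log_mul hεpos.ne' (hφpos x).ne', hφ, Real.log_rpow (by positivity)]
          ring
        have h4 : Real.log (1 + ‖x‖) ≤ ‖x‖ := by
          have := Real.log_le_sub_one_of_pos (show (0:ℝ) < 1 + ‖x‖ by positivity)
          linarith
        constructor
        · have := neg_abs_le (Real.log ε)
          nlinarith [mul_le_mul_of_nonneg_left h4 hrpos.le, Nat.cast_nonneg (α := ℝ) j]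
        · have := abs_nonneg (Real.log ε)
          nlinarith [mul_nonneg hrpos.le (norm_nonneg x)]
      calc |Real.log (q x)| * h x ≤ (((j:ℝ) + |Real.log ε|) + r * ‖x‖) * h x :=
            mul_le_mul_of_nonneg_right hb (hnn x)
        _ = ((j:ℝ) + |Real.log ε|) * h x + r * (‖x‖ * h x) := by ring
    have hfh_eq : (∫ x, (c₀ - Real.log (q x)) * h x) = c₀ - ∫ x, Real.log (q x) * h x := by
      have : (fun x => (c₀ - Real.log (q x)) * h x) =
          fun x => c₀ * h x - Real.log (q x) * h x := by funext x; ring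
      rw [this, integral_sub (hint.const_mul c₀) hlogq_int, integral_const_mul, hprob, mul_one]
    -- bound on ∫ log q * h from below
    have hFle : (∫ x, min ((j:ℝ) * h x) (h x * Real.log (h x))) ≤ ∫ x, Real.log (q x) * h x := by
      have hFint : Integrable (fun x => min ((j:ℝ) * h x) (h x * Real.log (h x))) := by
        refine Integrable.mono' hent.abs
          (((continuous_const.mul hc).min (Real.continuous_mul_log.comp hc)).aestronglyMeasurable)
          (Eventually.of_forall fun x => ?_)
        rw [Real.norm_eq_abs, abs_le]
        constructor
        · refine le_min ?_ (neg_abs_le _)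
          have : 0 ≤ (j:ℝ) * h x := mul_nonneg (Nat.cast_nonneg j) (hnn x)
          linarith [neg_abs_le (h x * Real.log (h x)), abs_nonneg (h x * Real.log (h x))]
        · exact le_trans (min_le_right _ _) (le_abs_self _)
      apply integral_mono hFint hlogq_int
      intro x
      rcases eq_or_lt_of_le (hnn x) with h0 | h0
      · simp [← h0]
      · rcases le_total (h x) K with hhK | hhK
        · have hqgeh : h x ≤ q x := le_min hhK (le_max_left _ _)
          have : Real.log (h x) ≤ Real.log (q x) := Real.log_le_log h0 hqgeh
          have h1 : h x * Real.log (h x) ≤ Real.log (q x) * h x := by nlinarith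
          exact le_trans (min_le_right _ _) h1
        · have hqgeK : K ≤ q x := le_min le_rfl (le_trans hhK (le_max_left _ _))
          have : (j : ℝ) ≤ Real.log (q x) := by
            rw [← hlogK]; exact Real.log_le_log hKpos hqgeK
          have h1 : (j:ℝ) * h x ≤ Real.log (q x) * h x :=
            mul_le_mul_of_nonneg_right this (hnn x)
          exact le_trans (min_le_left _ _) h1
    -- bound on ∫ q from above
    have hQle : (∫ x, q x) ≤ 1 + ε * I := by
      have : (∫ x, (h x + ε * φ x)) = 1 + ε * I := by
        rw [integral_add hint (hφint.const_mul ε), hprob, integral_const_mul, ← hI]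
      rw [← this]
      exact integral_mono hqint (hint.add (hφint.const_mul ε)) hqle
    have hlogQ : Real.log (∫ x, q x) ≤ δ / 2 := by
      have h1 : Real.log (∫ x, q x) ≤ Real.log (1 + ε * I) :=
        Real.log_le_log hQpos hQle
      have h2 : Real.log (1 + ε * I) ≤ ε * I := by
        have := Real.log_le_sub_one_of_pos (show (0:ℝ) < 1 + ε * I by nlinarith [mul_nonneg hεpos.le hI0])
        linarith
      have h3 : ε * I ≤ δ / 2 := by
        have h4 : ε * I ≤ δ / (2 * (I + 1)) * I :=
          mul_le_mul_of_nonneg_right hεle2 hI0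
        have h5 : δ / (2 * (I + 1)) * I ≤ δ / 2 := by
          rw [div_mul_eq_mul_div, div_le_div_iff₀ (by positivity) (by norm_num)]
          nlinarith
        linarith
      linarith
    have hlogZ : Real.log (∫ x, Real.exp (-(c₀ - Real.log (q x)))) =
        Real.log (∫ x, q x) - c₀ := by
      rw [hQint, Real.log_mul hQpos.ne' (Real.exp_ne_zero _), Real.log_exp]
      ring
    have goal_eq : (∫ x, (c₀ - Real.log (q x)) * h x) +
        Real.log (∫ x, Real.exp (-(c₀ - Real.log (q x)))) =
        Real.log (∫ x, q x) - ∫ x, Real.log (q x) * h x := by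
      rw [hfh_eq, hlogZ]; ring
    rw [goal_eq]
    linarith

/-- Entropy duality: for `h` continuous nonnegative with `h·λ` a probability measure of
finite first moment (and finite entropy), the infimum of
`∫ f h dλ + log ∫ e^{-f} dλ` over continuous `f > τ` with at most linear growth equals
`-∫ h log h dλ`. -/

theorem stmt11 {n : ℕ} (h : EuclideanSpace ℝ (Fin n) → ℝ)
    (hc : Continuous h) (hnn : ∀ x, 0 ≤ h x)
    (hint : Integrable h) (hprob : ∫ x, h x = 1)
    (hmom : Integrable fun x => ‖x‖ * h x)
    (hent : Integrable fun x => h x * Real.log (h x))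
    (τ : ℝ) :
    IsGLB
      {v : ℝ | ∃ f : EuclideanSpace ℝ (Fin n) → ℝ, Continuous f ∧
        (∀ x, τ < f x) ∧ (∃ C : ℝ, ∀ x, f x ≤ C * (1 + ‖x‖)) ∧
        (Integrable fun x => Real.exp (-f x)) ∧
        v = (∫ x, f x * h x) + Real.log (∫ x, Real.exp (-f x))}
      (-∫ x, h x * Real.log (h x)) := by
  constructor
  · rintro v ⟨f, hf, hτ, ⟨C, hC⟩, hef, rfl⟩
    exact stmt11_lower h hc hnn hint hprob hmom hent τ f hf hτ C hC hef
  · intro w hw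
    apply le_of_forall_pos_le_add
    intro δ hδ
    obtain ⟨j, hj⟩ := stmt11_exists_j h hc hnn hent δ hδ
    obtain ⟨f, hf, hτf, hC, hef, hval⟩ :=
      stmt11_construct h hc hnn hint hprob hmom hent τ δ hδ j hj
    have hwv := hw ⟨f, hf, hτf, hC, hef, rfl⟩
    linarith
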